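/- Let α be a finite type and let L be a regular language of words over α. Then the language over Option α consisting of all words (x.map some) ++ [none] ++ (y.map some), where (x, y) ranges over all L-bad pairs (i.e., x ∈ L, y ∈ L, and there is no z ∈ L with x ⊑ z and y ⊑ z), is a regular language. Consequently, L has the joint embedding property under the subword order if and only if this language is empty. -/

import Mathlib

namespace BadPairAux

open List

variable {α : Type}

/-! ### Generic regularity constructions -/

/-- Intersection of regular languages is regular. -/
lemma isRegular_inter {L₁ L₂ : Language α} (h₁ : L₁.IsRegular) (h₂ : L₂.IsRegular) :
    Language.IsRegular {x | x ∈ L₁ ∧ x ∈ L₂} := by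
  obtain ⟨σ₁, _, M₁, rfl⟩ := h₁
  obtain ⟨σ₂, _, M₂, rfl⟩ := h₂
  refine ⟨σ₁ × σ₂, inferInstance,
    ⟨fun s a => (M₁.step s.1 a, M₂.step s.2 a), (M₁.start, M₂.start),
      {s | s.1 ∈ M₁.accept ∧ s.2 ∈ M₂.accept}⟩, ?_⟩
  have key : ∀ (x : List α) (s : σ₁ × σ₂),
      DFA.evalFrom ⟨fun s a => (M₁.step s.1 a, M₂.step s.2 a), (M₁.start, M₂.start),
        {s | s.1 ∈ M₁.accept ∧ s.2 ∈ M₂.accept}⟩ s x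
        = (M₁.evalFrom s.1 x, M₂.evalFrom s.2 x) := by
    intro x
    induction x with
    | nil => intro s; rfl
    | cons a x ih => intro s; exact ih _
  ext x
  simp only [DFA.mem_accepts, DFA.eval, key]
  exact Iff.rfl

/-- Union of regular languages is regular. -/
lemma isRegular_union {L₁ L₂ : Language α} (h₁ : L₁.IsRegular) (h₂ : L₂.IsRegular) :
    Language.IsRegular {x | x ∈ L₁ ∨ x ∈ L₂} := by
  obtain ⟨σ₁, _, M₁, rfl⟩ := h₁
  obtain ⟨σ₂, _, M₂, rfl⟩ := h₂
  refine ⟨σ₁ × σ₂, inferInstance,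
    ⟨fun s a => (M₁.step s.1 a, M₂.step s.2 a), (M₁.start, M₂.start),
      {s | s.1 ∈ M₁.accept ∨ s.2 ∈ M₂.accept}⟩, ?_⟩
  have key : ∀ (x : List α) (s : σ₁ × σ₂),
      DFA.evalFrom ⟨fun s a => (M₁.step s.1 a, M₂.step s.2 a), (M₁.start, M₂.start),
        {s | s.1 ∈ M₁.accept ∨ s.2 ∈ M₂.accept}⟩ s x
        = (M₁.evalFrom s.1 x, M₂.evalFrom s.2 x) := by
    intro x
    induction x with
    | nil => intro s; rfl
    | cons a x ih => intro s; exact ih _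
  ext x
  simp only [DFA.mem_accepts, DFA.eval, key]
  exact Iff.rfl

lemma isRegular_empty {β : Type} : Language.IsRegular (∅ : Set (List β)) := by
  refine ⟨Unit, inferInstance, ⟨fun _ _ => (), (), ∅⟩, ?_⟩
  ext x
  exact iff_of_false (Set.notMem_empty _) (Set.notMem_empty _)

/-- A finite union of regular languages is regular. -/
lemma isRegular_biUnion {β ι : Type} (F : Finset ι) (G : ι → Language β)
    (h : ∀ q ∈ F, (G q).IsRegular) :
    Language.IsRegular (⋃ q ∈ F, (G q : Set (List β))) := by
  classical
  induction F using Finset.induction_on with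
  | empty =>
    rw [show (⋃ q ∈ (∅ : Finset ι), (G q : Set (List β))) = ∅ from Set.eq_empty_of_forall_notMem (fun x hx => by
      obtain ⟨q, hq, _⟩ := Set.mem_iUnion₂.mp hx; simp at hq)]; exact isRegular_empty (β := β)
  | @insert a s ha ih =>
    erw [Finset.set_biUnion_insert]
    have h1 : (G a).IsRegular := h a (Finset.mem_insert_self a s)
    have h2 := ih fun q hq => h q (Finset.mem_insert_of_mem hq)
    exact isRegular_union (L₁ := G a) (L₂ := (⋃ q ∈ s, (G q : Set (List β)))) h1 h2

open Classical in
/-- DFA recognizing the superwords of `a`. -/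
noncomputable def subDFA (a : List α) : DFA α (Fin (a.length + 1)) where
  step i c :=
    if h : (i : ℕ) < a.length then
      (if c = a[(i : ℕ)] then ⟨(i : ℕ) + 1, by omega⟩ else i)
    else i
  start := ⟨0, by omega⟩
  accept := {i | (i : ℕ) = a.length}

lemma subDFA_key (a : List α) :
    ∀ (x : List α) (i : Fin (a.length + 1)),
      (((subDFA a).evalFrom i x : Fin (a.length + 1)) : ℕ) = a.length
        ↔ (a.drop (i : ℕ)).Sublist x := by
  intro x
  induction x with
  | nil =>
    intro i
    simp only [DFA.evalFrom_nil, List.sublist_nil]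
    constructor
    · intro h; rw [List.drop_eq_nil_iff]; omega
    · intro h; rw [List.drop_eq_nil_iff] at h; omega
  | cons c x ih =>
    intro i
    have hstep : (subDFA a).evalFrom i (c :: x) = (subDFA a).evalFrom ((subDFA a).step i c) x :=
      rfl
    rw [hstep]
    by_cases h : (i : ℕ) < a.length
    · have hdrop : a.drop (i : ℕ) = a[(i : ℕ)] :: a.drop ((i : ℕ) + 1) :=
        List.drop_eq_getElem_cons h
      by_cases hc : c = a[(i : ℕ)]
      · have hs : (subDFA a).step i c = ⟨(i : ℕ) + 1, by omega⟩ := by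
          simp [subDFA, h, hc]
        rw [hs, ih, hdrop, ← hc, List.cons_sublist_cons]
      · have hs : (subDFA a).step i c = i := by
          simp [subDFA, h, hc]
        rw [hs, ih, hdrop]
        constructor
        · intro hsub
          exact hsub.cons _
        · intro hsub
          rcases List.sublist_cons_iff.mp hsub with h' | ⟨r, hr, _⟩
          · exact h'
          · exact absurd (by injection hr with h1 _; exact h1.symm) hc
    · have hnil : a.drop (i : ℕ) = [] := List.drop_eq_nil_iff.mpr (by omega)
      have hs : (subDFA a).step i c = i := by simp [subDFA, h]
      rw [hs, ih, hnil]
      simp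
/-- The language of superwords of a fixed word is regular. -/
lemma isRegular_superwords (a : List α) :
    Language.IsRegular {x : List α | a.Sublist x} := by
  refine ⟨Fin (a.length + 1), inferInstance, subDFA a, ?_⟩
  ext x
  rw [DFA.mem_accepts]
  have := subDFA_key a x (subDFA a).start
  exact this


/-! ### Separator concatenation -/

open Classical in
/-- DFA for `{ x # y | x ∈ accepts M₁, y ∈ accepts M₂ }` over `Option α`. -/
noncomputable def sepDFA {σ₁ σ₂ : Type} (M₁ : DFA α σ₁) (M₂ : DFA α σ₂) :
    DFA (Option α) (Option (σ₁ ⊕ σ₂)) where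
  step s c :=
    match s, c with
    | some (Sum.inl q), some a => some (Sum.inl (M₁.step q a))
    | some (Sum.inl q), none => if q ∈ M₁.accept then some (Sum.inr M₂.start) else none
    | some (Sum.inr q), some a => some (Sum.inr (M₂.step q a))
    | some (Sum.inr _), none => none
    | none, _ => none
  start := some (Sum.inl M₁.start)
  accept := {s | ∃ q ∈ M₂.accept, s = some (Sum.inr q)}

variable {σ₁ σ₂ : Type} (M₁ : DFA α σ₁) (M₂ : DFA α σ₂)

lemma sepDFA_dead : ∀ w : List (Option α), (sepDFA M₁ M₂).evalFrom none w = none := by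
  intro w
  induction w with
  | nil => rfl
  | cons c w ih =>
    have : (sepDFA M₁ M₂).step none c = none := rfl
    show (sepDFA M₁ M₂).evalFrom ((sepDFA M₁ M₂).step none c) w = none
    rw [this]; exact ih

lemma sepDFA_inl (x : List α) : ∀ q : σ₁,
    (sepDFA M₁ M₂).evalFrom (some (Sum.inl q)) (x.map some) = some (Sum.inl (M₁.evalFrom q x)) := by
  induction x with
  | nil => intro q; rfl
  | cons a x ih => intro q; exact ih (M₁.step q a)

lemma sepDFA_inr (y : List α) : ∀ q : σ₂,
    (sepDFA M₁ M₂).evalFrom (some (Sum.inr q)) (y.map some) = some (Sum.inr (M₂.evalFrom q y)) := by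
  induction y with
  | nil => intro q; rfl
  | cons a y ih => intro q; exact ih (M₂.step q a)

lemma sepDFA_inr_reach : ∀ (w : List (Option α)) (q q' : σ₂),
    (sepDFA M₁ M₂).evalFrom (some (Sum.inr q)) w = some (Sum.inr q') →
      ∃ y : List α, w = y.map some ∧ M₂.evalFrom q y = q' := by
  intro w
  induction w with
  | nil =>
    intro q q' h
    simp only [DFA.evalFrom_nil] at h
    refine ⟨[], rfl, ?_⟩
    simpa using h
  | cons c w ih =>
    intro q q' h
    cases c with
    | some a =>
      have hs : (sepDFA M₁ M₂).step (some (Sum.inr q)) (some a) = some (Sum.inr (M₂.step q a)) :=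
        rfl
      rw [show (sepDFA M₁ M₂).evalFrom (some (Sum.inr q)) (some a :: w)
            = (sepDFA M₁ M₂).evalFrom ((sepDFA M₁ M₂).step (some (Sum.inr q)) (some a)) w from rfl,
          hs] at h
      obtain ⟨y, rfl, hy⟩ := ih (M₂.step q a) q' h
      exact ⟨a :: y, rfl, hy⟩
    | none =>
      exfalso
      have hs : (sepDFA M₁ M₂).step (some (Sum.inr q)) none = none := rfl
      rw [show (sepDFA M₁ M₂).evalFrom (some (Sum.inr q)) (none :: w)
            = (sepDFA M₁ M₂).evalFrom ((sepDFA M₁ M₂).step (some (Sum.inr q)) none) w from rfl,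
          hs, sepDFA_dead] at h
      cases h

lemma sepDFA_reach : ∀ (w : List (Option α)) (q : σ₁) (q' : σ₂),
    (sepDFA M₁ M₂).evalFrom (some (Sum.inl q)) w = some (Sum.inr q') →
      ∃ x y : List α, w = x.map some ++ [none] ++ y.map some ∧
        M₁.evalFrom q x ∈ M₁.accept ∧ M₂.evalFrom M₂.start y = q' := by
  intro w
  induction w with
  | nil =>
    intro q q' h
    simp only [DFA.evalFrom_nil] at h
    simp at h
  | cons c w ih =>
    intro q q' h
    cases c with
    | some a =>
      have hs : (sepDFA M₁ M₂).step (some (Sum.inl q)) (some a) = some (Sum.inl (M₁.step q a)) :=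
        rfl
      rw [show (sepDFA M₁ M₂).evalFrom (some (Sum.inl q)) (some a :: w)
            = (sepDFA M₁ M₂).evalFrom ((sepDFA M₁ M₂).step (some (Sum.inl q)) (some a)) w from rfl,
          hs] at h
      obtain ⟨x, y, rfl, hx, hy⟩ := ih (M₁.step q a) q' h
      exact ⟨a :: x, y, rfl, hx, hy⟩
    | none =>
      rw [show (sepDFA M₁ M₂).evalFrom (some (Sum.inl q)) (none :: w)
            = (sepDFA M₁ M₂).evalFrom ((sepDFA M₁ M₂).step (some (Sum.inl q)) none) w from rfl] at h
      by_cases hq : q ∈ M₁.accept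
      · have hs : (sepDFA M₁ M₂).step (some (Sum.inl q)) none = some (Sum.inr M₂.start) := by
          simp [sepDFA, hq]
        rw [hs] at h
        obtain ⟨y, rfl, hy⟩ := sepDFA_inr_reach M₁ M₂ w M₂.start q' h
        exact ⟨[], y, rfl, by simpa using hq, hy⟩
      · exfalso
        have hs : (sepDFA M₁ M₂).step (some (Sum.inl q)) none = none := by
          simp [sepDFA, hq]
        rw [hs, sepDFA_dead] at h
        cases h

/-- The separator concatenation of two regular languages is regular. -/
lemma isRegular_sep {P R : Language α} (hp : P.IsRegular) (hr : R.IsRegular) :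
    Language.IsRegular
      {w : List (Option α) | ∃ x ∈ P, ∃ y ∈ R, w = (x.map some) ++ [none] ++ (y.map some)} := by
  obtain ⟨σ₁, _, M₁, rfl⟩ := hp
  obtain ⟨σ₂, _, M₂, rfl⟩ := hr
  refine ⟨Option (σ₁ ⊕ σ₂), inferInstance, sepDFA M₁ M₂, ?_⟩
  ext w
  rw [DFA.mem_accepts]
  constructor
  · intro h
    obtain ⟨q', hq', hw⟩ := h
    obtain ⟨x, y, rfl, hx, hy⟩ := sepDFA_reach M₁ M₂ w M₁.start q' hw
    exact ⟨x, hx, y, by rw [DFA.mem_accepts, DFA.eval, hy]; exact hq', rfl⟩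
  · rintro ⟨x, hx, y, hy, rfl⟩
    have h1 : (sepDFA M₁ M₂).eval ((x.map some ++ [none]) ++ y.map some)
        = (sepDFA M₁ M₂).evalFrom
            ((sepDFA M₁ M₂).evalFrom (sepDFA M₁ M₂).start (x.map some ++ [none])) (y.map some) := by
      rw [DFA.eval, DFA.evalFrom, List.foldl_append]; rfl
    have h2 : (sepDFA M₁ M₂).evalFrom (sepDFA M₁ M₂).start (x.map some ++ [none])
        = some (Sum.inr M₂.start) := by
      rw [DFA.evalFrom_append_singleton,
        show (sepDFA M₁ M₂).start = some (Sum.inl M₁.start) from rfl, sepDFA_inl]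
      have hx' : M₁.evalFrom M₁.start x ∈ M₁.accept := hx
      simp [sepDFA, hx']
    rw [show (x.map some ++ [none] ++ y.map some) = ((x.map some ++ [none]) ++ y.map some) from rfl,
        h1, h2, sepDFA_inr]
    exact ⟨M₂.evalFrom M₂.start y, hy, rfl⟩


/-! ### Higman finite basis for upward-closed sets of pairs -/

lemma forall₂_eq {l₁ l : List α} (hf : List.Forall₂ Eq l₁ l) : l₁ = l := by
  induction hf with
  | nil => rfl
  | cons h _ ih => rw [h, ih]

lemma sublistForall₂_eq_iff {l₁ l₂ : List α} :
    List.SublistForall₂ Eq l₁ l₂ ↔ l₁.Sublist l₂ := by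
  rw [List.sublistForall₂_iff]
  constructor
  · rintro ⟨l, hf, hs⟩
    rwa [forall₂_eq hf]
  · intro h
    exact ⟨l₁, List.forall₂_refl l₁, h⟩

lemma pair_subseq [Fintype α] (f : ℕ → List α × List α) :
    ∃ m n, m < n ∧ (f m).1.Sublist (f n).1 ∧ (f m).2.Sublist (f n).2 := by
  have h1 : (Set.univ : Set α).PartiallyWellOrderedOn Eq :=
    Set.Finite.partiallyWellOrderedOn Set.finite_univ
  have h2 := Set.PartiallyWellOrderedOn.partiallyWellOrderedOn_sublistForall₂ Eq h1
  haveI : IsPreorder (List α) (List.SublistForall₂ (α := α) Eq) := {}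
  have h3 := h2.prod h2
  obtain ⟨m, n, hmn, hr⟩ := h3.exists_lt (f := f) (fun n => by
    constructor <;> exact fun x _ => Set.mem_univ x)
  exact ⟨m, n, hmn, sublistForall₂_eq_iff.mp hr.1, sublistForall₂_eq_iff.mp hr.2⟩

lemma exists_finite_basis [Fintype α] (U : Set (List α × List α))
    (hup : ∀ p q : List α × List α, p ∈ U → p.1.Sublist q.1 → p.2.Sublist q.2 → q ∈ U) :
    ∃ F : Finset (List α × List α),
      ∀ p : List α × List α, p ∈ U ↔ ∃ q ∈ F, q.1.Sublist p.1 ∧ q.2.Sublist p.2 := by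
  classical
  set Min : Set (List α × List α) :=
    {p | p ∈ U ∧ ∀ q ∈ U, q.1.Sublist p.1 → q.2.Sublist p.2 → q = p} with hMin
  have claim1 : ∀ N (p : List α × List α), p ∈ U → p.1.length + p.2.length ≤ N →
      ∃ q ∈ Min, q.1.Sublist p.1 ∧ q.2.Sublist p.2 := by
    intro N
    induction N using Nat.strong_induction_on with
    | _ N ih =>
      intro p hp hl
      by_cases hmin : ∀ q ∈ U, q.1.Sublist p.1 → q.2.Sublist p.2 → q = p
      · exact ⟨p, ⟨hp, hmin⟩, List.Sublist.refl _, List.Sublist.refl _⟩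
      · push_neg at hmin
        obtain ⟨q, hq, h1, h2, hne⟩ := hmin
        have hlt : q.1.length + q.2.length < p.1.length + p.2.length := by
          have l1 := h1.length_le
          have l2 := h2.length_le
          by_contra hge
          push_neg at hge
          have e1 : q.1.length = p.1.length := by omega
          have e2 : q.2.length = p.2.length := by omega
          exact hne (Prod.ext (h1.eq_of_length e1) (h2.eq_of_length e2))
        obtain ⟨r, hr, hr1, hr2⟩ := ih (q.1.length + q.2.length) (by omega) q hq le_rfl
        exact ⟨r, hr, hr1.trans h1, hr2.trans h2⟩
  have claim2 : Min.Finite := by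
    by_contra hinf
    have hinf' : Min.Infinite := hinf
    have f := hinf'.natEmbedding
    obtain ⟨m, n, hmn, hs1, hs2⟩ := pair_subseq (fun k => ((f k : Min) : List α × List α))
    have hm := (f m).2
    have hn := (f n).2
    have heq : ((f m) : List α × List α) = ((f n) : List α × List α) :=
      hn.2 _ hm.1 hs1 hs2
    exact absurd (f.injective (Subtype.ext heq)) (by omega)
  refine ⟨claim2.toFinset, ?_⟩
  intro p
  constructor
  · intro hp
    obtain ⟨q, hq, h1, h2⟩ := claim1 (p.1.length + p.2.length) p hp le_rfl
    exact ⟨q, claim2.mem_toFinset.mpr hq, h1, h2⟩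
  · rintro ⟨q, hq, h1, h2⟩
    exact hup q p ((claim2.mem_toFinset.mp hq).1) h1 h2

end BadPairAux

/-- `(x, y)` is an `L`-bad pair of words if `x ∈ L`, `y ∈ L`, and no `z ∈ L` contains
both `x` and `y` as (not necessarily contiguous) subwords. -/
def WordBad {α : Type} (L : Language α) (x y : List α) : Prop :=
  x ∈ L ∧ y ∈ L ∧ ¬ ∃ z ∈ L, x.Sublist z ∧ y.Sublist z

/-- The language of `L`-bad pairs, encoded as `(x.map some) ++ [none] ++ (y.map some)`. -/
def badPairLanguage {α : Type} (L : Language α) : Language (Option α) :=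
  {w : List (Option α) | ∃ x y : List α, WordBad L x y ∧
    w = (x.map some) ++ [none] ++ (y.map some)}

/-- for a regular language `L` over a finite alphabet, the language of
`L`-bad pairs is regular, and `L` has the joint embedding property under the subword
order if and only if this language is empty. -/
theorem bad_word_pairs_regular_and_jep {α : Type} [Fintype α] (L : Language α)
    (hL : L.IsRegular) :
    (badPairLanguage L).IsRegular ∧
      ((∀ x ∈ L, ∀ y ∈ L, ∃ z ∈ L, x.Sublist z ∧ y.Sublist z) ↔
        badPairLanguage L = (∅ : Set (List (Option α)))) := by
  constructor
  · -- regularity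
    set U : Set (List α × List α) := {p | ¬ ∃ z ∈ L, p.1.Sublist z ∧ p.2.Sublist z} with hU
    have hup : ∀ p q : List α × List α,
        p ∈ U → p.1.Sublist q.1 → p.2.Sublist q.2 → q ∈ U := by
      intro p q hp h1 h2 hz
      obtain ⟨z, hzL, hz1, hz2⟩ := hz
      exact hp ⟨z, hzL, h1.trans hz1, h2.trans hz2⟩
    obtain ⟨F, hF⟩ := BadPairAux.exists_finite_basis U hup
    have heq : (badPairLanguage L : Set (List (Option α))) =
        ⋃ q ∈ F, ({w : List (Option α) |
          ∃ x ∈ ({x | x ∈ L ∧ q.1.Sublist x} : Language α),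
          ∃ y ∈ ({y | y ∈ L ∧ q.2.Sublist y} : Language α),
            w = (x.map some) ++ [none] ++ (y.map some)} : Set (List (Option α))) := by
      ext w
      constructor
      · rintro ⟨x, y, ⟨hx, hy, hbad⟩, rfl⟩
        obtain ⟨q, hqF, h1, h2⟩ := (hF (x, y)).mp hbad
        exact Set.mem_iUnion₂.mpr ⟨q, hqF, ⟨x, ⟨hx, h1⟩, y, ⟨hy, h2⟩, rfl⟩⟩
      · intro h
        obtain ⟨q, hqF, hw⟩ := Set.mem_iUnion₂.mp h
        obtain ⟨x, ⟨hx, h1⟩, y, ⟨hy, h2⟩, rfl⟩ := hw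
        exact ⟨x, y, ⟨hx, hy, (hF (x, y)).mpr ⟨q, hqF, h1, h2⟩⟩, rfl⟩
    rw [show (badPairLanguage L) = _ from heq]
    apply BadPairAux.isRegular_biUnion F
      (fun q => ({w : List (Option α) |
          ∃ x ∈ ({x | x ∈ L ∧ q.1.Sublist x} : Language α),
          ∃ y ∈ ({y | y ∈ L ∧ q.2.Sublist y} : Language α),
            w = (x.map some) ++ [none] ++ (y.map some)} : Language (Option α)))
    intro q _
    exact BadPairAux.isRegular_sep
      (BadPairAux.isRegular_inter hL (BadPairAux.isRegular_superwords q.1))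
      (BadPairAux.isRegular_inter hL (BadPairAux.isRegular_superwords q.2))
  · constructor
    · intro hjep
      erw [Set.eq_empty_iff_forall_notMem]
      intro w
      rintro ⟨x, y, ⟨hx, hy, hbad⟩, rfl⟩
      exact hbad (hjep x hx y hy)
    · intro hempty x hx y hy
      by_contra hno
      have hmem : (x.map some) ++ [none] ++ (y.map some) ∈ badPairLanguage L :=
        ⟨x, y, ⟨hx, hy, hno⟩, rfl⟩
      rw [hempty] at hmem
      exact hmem
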